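/- Assume both the β-strong P-order and the γ-strong C-order assumptions hold for some β ≥ 0 and γ ≥ 0. Then every Naive-Local matching M' satisfies w(M) ≤ max{1, β+γ}·w(M') for every matching M of the instance; hence the Naive-Local algorithm, which inspects no weights at all, is max{1, β+γ}-approximate. -/
import Mathlib


/-- A matching of a bipartite instance with edge set `E ⊆ P × C`. -/
def IsBipMatching {s q : ℕ} (E M : Finset (Fin s × Fin q)) : Prop :=
  M ⊆ E ∧ ∀ e₁ ∈ M, ∀ e₂ ∈ M, e₁ ≠ e₂ → e₁.1 ≠ e₂.1 ∧ e₁.2 ≠ e₂.2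

/-- The β-strong P-order assumption. -/
def StrongPOrder {s q : ℕ} (E : Finset (Fin s × Fin q)) (w : Fin s × Fin q → ℝ)
    (β : ℝ) : Prop :=
  ∀ i j : Fin s, i < j → ∀ c : Fin q, (i, c) ∈ E → (j, c) ∈ E → w (j, c) ≤ β * w (i, c)

/-- The γ-strong C-order assumption. -/
def StrongCOrder {s q : ℕ} (E : Finset (Fin s × Fin q)) (w : Fin s × Fin q → ℝ)
    (γ : ℝ) : Prop :=
  ∀ i j : Fin q, i < j → ∀ p : Fin s, (p, i) ∈ E → (p, j) ∈ E → w (p, j) ≤ γ * w (p, i)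

/-- A Naive-Local matching: a matching `M'` such that every edge `(p_j, c_x) ∈ E \ M'`
is either blocked (some `(p_i, c_x) ∈ M'` with `i < j`) or skipped in favour of an
earlier C-neighbor (some `(p_j, c_y) ∈ M'` with `y < x`). -/
def NaiveLocal {s q : ℕ} (E M' : Finset (Fin s × Fin q)) : Prop :=
  IsBipMatching E M' ∧ ∀ e ∈ E, e ∉ M' →
    (∃ i : Fin s, i < e.1 ∧ (i, e.2) ∈ M') ∨
    (∃ y : Fin q, y < e.2 ∧ (e.1, y) ∈ M')

/-- Under both the β-strong P-order and the γ-strong C-order assumptions,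
the Naive-Local algorithm (which inspects no weights) is max{1, β+γ}-approximate. -/
theorem stmt4 {s q : ℕ} (E : Finset (Fin s × Fin q)) (w : Fin s × Fin q → ℝ)
    (hw : ∀ e ∈ E, 0 < w e) (β γ : ℝ) (hβ : 0 ≤ β) (hγ : 0 ≤ γ)
    (hordP : StrongPOrder E w β) (hordC : StrongCOrder E w γ)
    (M' : Finset (Fin s × Fin q)) (hM' : NaiveLocal E M')
    (M : Finset (Fin s × Fin q)) (hM : IsBipMatching E M) :
    ∑ e ∈ M, w e ≤ max 1 (β + γ) * ∑ e ∈ M', w e := by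
  classical
  obtain ⟨hME, hMm⟩ := hM
  obtain ⟨⟨hM'E, _⟩, hloc⟩ := hM'
  have hchoice : ∀ e ∈ M, ∃ f, f ∈ M' ∧
      (f = e ∨ (f.2 = e.2 ∧ f.1 < e.1) ∨ (f.1 = e.1 ∧ f.2 < e.2)) := by
    intro e he
    by_cases h : e ∈ M'
    · exact ⟨e, h, Or.inl rfl⟩
    · rcases hloc e (hME he) h with ⟨i, hi, hiM⟩ | ⟨y, hy, hyM⟩
      · exact ⟨(i, e.2), hiM, Or.inr (Or.inl ⟨rfl, hi⟩)⟩
      · exact ⟨(e.1, y), hyM, Or.inr (Or.inr ⟨rfl, hy⟩)⟩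
  choose! φ hφ1 hφ2 using hchoice
  have hkey : ∀ f ∈ M', ∑ e ∈ M.filter (fun e => φ e = f), w e ≤ max 1 (β + γ) * w f := by
    intro f hf
    have hwf : 0 < w f := hw f (hM'E hf)
    set F := M.filter (fun e => φ e = f) with hF
    have hFM : ∀ e ∈ F, e ∈ M := fun e he => (Finset.mem_filter.mp he).1
    have hprop : ∀ e ∈ F, f = e ∨ (f.2 = e.2 ∧ f.1 < e.1) ∨ (f.1 = e.1 ∧ f.2 < e.2) := by
      intro e he
      have h := Finset.mem_filter.mp he
      have h2 := hφ2 e h.1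
      rwa [h.2] at h2
    by_cases hfM : f ∈ M
    · -- fiber can only be {f}
      have hsub : F ⊆ {f} := by
        intro e he
        rcases hprop e he with h | ⟨h1, h2⟩ | ⟨h1, h2⟩
        · simp [h]
        · by_cases hne : f = e
          · simp [hne]
          · exact absurd h1 (hMm f hfM e (hFM e he) hne).2
        · by_cases hne : f = e
          · simp [hne]
          · exact absurd h1 (hMm f hfM e (hFM e he) hne).1
      have h1 : ∑ e ∈ F, w e ≤ ∑ e ∈ ({f} : Finset _), w e := by
        refine Finset.sum_le_sum_of_subset_of_nonneg hsub ?_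
        intro e he _
        have : e = f := Finset.mem_singleton.mp he
        exact (this ▸ hwf).le
      have h2 : ∑ e ∈ ({f} : Finset _), w e = w f := Finset.sum_singleton _ _
      calc ∑ e ∈ F, w e ≤ w f := h1.trans h2.le
        _ = 1 * w f := (one_mul _).symm
        _ ≤ max 1 (β + γ) * w f :=
          mul_le_mul_of_nonneg_right (le_max_left _ _) hwf.le
    · -- split fiber into the P-charged part and the C-charged part
      set p : Fin s × Fin q → Prop := fun e => f.2 = e.2 ∧ f.1 < e.1 with hp
      have hsplit := Finset.sum_filter_add_sum_filter_not F p w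
      have hne : ∀ e ∈ F, f ≠ e := by
        intro e he h; exact hfM (h ▸ hFM e he)
      -- bound on the P-charged part
      have hPbound : ∀ e ∈ F.filter p, w e ≤ β * w f := by
        intro e he
        obtain ⟨heF, h1, h2⟩ := Finset.mem_filter.mp he
        have hfE : (f.1, e.2) ∈ E := by rw [← h1]; simpa using hM'E hf
        have heE : (e.1, e.2) ∈ E := by simpa using hME (hFM e heF)
        have h3 := hordP f.1 e.1 h2 e.2 hfE heE
        have heq : (f.1, e.2) = f := by rw [← h1]
        rw [heq] at h3
        simpa using h3
      have hPcard : (F.filter p).card ≤ 1 := by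
        refine Finset.card_le_one.mpr ?_
        intro a ha b hb
        obtain ⟨haF, ha1, _⟩ := Finset.mem_filter.mp ha
        obtain ⟨hbF, hb1, _⟩ := Finset.mem_filter.mp hb
        by_contra hab
        exact (hMm a (hFM a haF) b (hFM b hbF) hab).2 (ha1 ▸ hb1)
      have hPsum : ∑ e ∈ F.filter p, w e ≤ β * w f := by
        have hnn : (0:ℝ) ≤ β * w f := mul_nonneg hβ hwf.le
        calc ∑ e ∈ F.filter p, w e ≤ (F.filter p).card • (β * w f) :=
              Finset.sum_le_card_nsmul _ _ _ hPbound
          _ = ((F.filter p).card : ℝ) * (β * w f) := nsmul_eq_mul _ _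
          _ ≤ 1 * (β * w f) := by
              refine mul_le_mul_of_nonneg_right ?_ hnn
              exact_mod_cast hPcard
          _ = β * w f := one_mul _
      -- bound on the C-charged part
      have hCbound : ∀ e ∈ F.filter (fun e => ¬ p e), w e ≤ γ * w f := by
        intro e he
        obtain ⟨heF, hnp⟩ := Finset.mem_filter.mp he
        rcases hprop e heF with h | h | ⟨h1, h2⟩
        · exact absurd h (hne e heF)
        · exact absurd h hnp
        · have hfE : (e.1, f.2) ∈ E := by rw [← h1]; simpa using hM'E hf
          have heE : (e.1, e.2) ∈ E := by simpa using hME (hFM e heF)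
          have h3 := hordC f.2 e.2 h2 e.1 hfE heE
          have heq : (e.1, f.2) = f := by rw [← h1]
          rw [heq] at h3
          simpa using h3
      have hCcard : (F.filter (fun e => ¬ p e)).card ≤ 1 := by
        refine Finset.card_le_one.mpr ?_
        intro a ha b hb
        obtain ⟨haF, hna⟩ := Finset.mem_filter.mp ha
        obtain ⟨hbF, hnb⟩ := Finset.mem_filter.mp hb
        have ha1 : f.1 = a.1 := by
          rcases hprop a haF with h | h | h
          · exact absurd h (hne a haF)
          · exact absurd h hna
          · exact h.1
        have hb1 : f.1 = b.1 := by
          rcases hprop b hbF with h | h | h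
          · exact absurd h (hne b hbF)
          · exact absurd h hnb
          · exact h.1
        by_contra hab
        exact (hMm a (hFM a haF) b (hFM b hbF) hab).1 (ha1 ▸ hb1)
      have hCsum : ∑ e ∈ F.filter (fun e => ¬ p e), w e ≤ γ * w f := by
        have hnn : (0:ℝ) ≤ γ * w f := mul_nonneg hγ hwf.le
        calc ∑ e ∈ F.filter (fun e => ¬ p e), w e
            ≤ (F.filter (fun e => ¬ p e)).card • (γ * w f) :=
              Finset.sum_le_card_nsmul _ _ _ hCbound
          _ = ((F.filter (fun e => ¬ p e)).card : ℝ) * (γ * w f) := nsmul_eq_mul _ _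
          _ ≤ 1 * (γ * w f) := by
              refine mul_le_mul_of_nonneg_right ?_ hnn
              exact_mod_cast hCcard
          _ = γ * w f := one_mul _
      calc ∑ e ∈ F, w e
          = ∑ e ∈ F.filter p, w e + ∑ e ∈ F.filter (fun e => ¬ p e), w e := hsplit.symm
        _ ≤ β * w f + γ * w f := add_le_add hPsum hCsum
        _ = (β + γ) * w f := (add_mul _ _ _).symm
        _ ≤ max 1 (β + γ) * w f :=
          mul_le_mul_of_nonneg_right (le_max_right _ _) hwf.le
  calc ∑ e ∈ M, w e
      = ∑ f ∈ M', ∑ e ∈ M.filter (fun e => φ e = f), w e :=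
        (Finset.sum_fiberwise_of_maps_to hφ1 w).symm
    _ ≤ ∑ f ∈ M', max 1 (β + γ) * w f := Finset.sum_le_sum hkey
    _ = max 1 (β + γ) * ∑ e ∈ M', w e := (Finset.mul_sum _ _ _).symm
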